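/- Let A = P_z + (1/2)P_{−z} on ℂ² and Φ(ρ) = A^{1/2} ρ A^{1/2}. There exist no channel Λ, state ξ₁, and operation Φ' with Φ'*(I) = P_x such that both Λ − Φ and Λ − Φ' are completely positive. Equivalently, the projection P_x and the Lüders operation Φ of A are strongly incompatible. -/

import Mathlib

open Matrix ComplexOrder
open scoped Kronecker

noncomputable section

/-- `n × n` complex matrices, modelling operators on an `n`-dimensional Hilbert space. -/
abbrev Mat (n : ℕ) := Matrix (Fin n) (Fin n) ℂ

/-- An effect: an operator `E` with `0 ≤ E ≤ I` in the Loewner order. -/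
def IsEffect {n : ℕ} (E : Mat n) : Prop := E.PosSemidef ∧ ((1 : Mat n) - E).PosSemidef

/-- The extension `Φ ⊗ id_k` of a map between matrix algebras, acting on block matrices. -/
def cpExt {m n : ℕ} (Φ : Mat m →ₗ[ℂ] Mat n) (k : ℕ)
    (M : Matrix (Fin m × Fin k) (Fin m × Fin k) ℂ) :
    Matrix (Fin n × Fin k) (Fin n × Fin k) ℂ :=
  Matrix.of fun p q => Φ (Matrix.of fun a b => M (a, p.2) (b, q.2)) p.1 q.1

/-- Complete positivity of a linear map between matrix algebras. -/
def IsCP {m n : ℕ} (Φ : Mat m →ₗ[ℂ] Mat n) : Prop :=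
  ∀ (k : ℕ) (M : Matrix (Fin m × Fin k) (Fin m × Fin k) ℂ),
    M.PosSemidef → (cpExt Φ k M).PosSemidef

/-- Lüders-type conjugation map `ρ ↦ A * ρ * A` (for self-adjoint `A`). -/
def luders {n : ℕ} (A : Mat n) : Mat n →ₗ[ℂ] Mat n :=
  (LinearMap.mulRight ℂ A).comp (LinearMap.mulLeft ℂ A)

/-- Pauli `σ_x`. -/
def sx : Mat 2 := !![0, 1; 1, 0]
/-- Pauli `σ_z`. -/
def sz : Mat 2 := !![1, 0; 0, -1]

/-- `P_x = (I + σ_x)/2`. -/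
def Px : Mat 2 := ((1 : ℂ) / 2) • ((1 : Mat 2) + sx)
/-- `P_z = (I + σ_z)/2`. -/
def Pz : Mat 2 := ((1 : ℂ) / 2) • ((1 : Mat 2) + sz)
/-- `P_{-z} = (I - σ_z)/2`. -/
def Pnz : Mat 2 := ((1 : ℂ) / 2) • ((1 : Mat 2) - sz)

/-- `A^{1/2} = P_z + (1/√2)·P_{-z}`, the square root of `A = P_z + (1/2)·P_{-z}`. -/
def sqrtA : Mat 2 := Pz + ((Real.sqrt 2 : ℂ))⁻¹ • Pnz

def rho (c d : Fin 2) : Mat 2 :=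
  Matrix.of fun a b => (if a = c then (1:ℂ) else 0) * (if b = d then 1 else 0)

def MM : Matrix (Fin 2 × Fin 2) (Fin 2 × Fin 2) ℂ :=
  Matrix.of fun p q => (if p.1 = p.2 then (1:ℂ) else 0) * (if q.1 = q.2 then 1 else 0)

lemma cpExt_MM (Ψ : Mat 2 →ₗ[ℂ] Mat 2) (p q : Fin 2 × Fin 2) :
    cpExt Ψ 2 MM p q = Ψ (rho p.2 q.2) p.1 q.1 := rfl

lemma MM_psd : MM.PosSemidef := by
  refine posSemidef_iff_dotProduct_mulVec.mpr ⟨?_, ?_⟩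
  · ext p q
    simp only [Matrix.conjTranspose_apply, MM, Matrix.of_apply]
    split_ifs <;> simp
  · intro x
    have h : star x ⬝ᵥ MM *ᵥ x
        = star (x (0,0) + x (1,1)) * (x (0,0) + x (1,1)) := by
      simp [MM, dotProduct, Matrix.mulVec, Fintype.sum_prod_type, Fin.sum_univ_two]
      ring
    rw [h]
    exact star_mul_self_nonneg _

lemma sqrtA_eq : sqrtA = !![1, 0; 0, ((Real.sqrt 2 : ℂ))⁻¹] := by
  ext i j
  fin_cases i <;> fin_cases j <;>
    simp [sqrtA, Pz, Pnz, sz, Matrix.one_apply] <;> norm_num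

lemma Px_eq : Px = !![1/2, 1/2; 1/2, 1/2] := by
  ext i j
  fin_cases i <;> fin_cases j <;>
    simp [Px, sx, Matrix.one_apply] <;> norm_num

lemma lud_a : luders sqrtA (rho 0 0) 0 0 = 1 := by
  simp [luders, LinearMap.mulRight_apply, LinearMap.mulLeft_apply, sqrtA_eq, rho,
    Matrix.mul_apply, Fin.sum_univ_two, Matrix.vecHead, Matrix.vecTail]

lemma lud_b : luders sqrtA (rho 0 0) 1 1 = 0 := by
  simp [luders, LinearMap.mulRight_apply, LinearMap.mulLeft_apply, sqrtA_eq, rho,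
    Matrix.mul_apply, Fin.sum_univ_two, Matrix.vecHead, Matrix.vecTail]

lemma lud_c : luders sqrtA (rho 1 1) 1 1 = 1/2 := by
  have h2 : ((Real.sqrt 2 : ℂ))⁻¹ * ((Real.sqrt 2 : ℂ))⁻¹ = 1/2 := by
    rw [← mul_inv]
    norm_cast
    rw [Real.mul_self_sqrt (by norm_num)]
    norm_num
  simp [luders, LinearMap.mulRight_apply, LinearMap.mulLeft_apply, sqrtA_eq, rho,
    Matrix.mul_apply, Fin.sum_univ_two, Matrix.vecHead, Matrix.vecTail, h2]

lemma trace_rho (c d : Fin 2) : (rho c d).trace = if c = d then 1 else 0 := by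
  fin_cases c <;> fin_cases d <;>
    simp [rho, Matrix.trace_fin_two]

lemma trace_rho_Px (c d : Fin 2) : (rho c d * Px).trace = 1/2 := by
  fin_cases c <;> fin_cases d <;>
    simp [rho, Px_eq, Matrix.trace_fin_two, Matrix.mul_apply, Fin.sum_univ_two]


/-- The projection `P_x` and the Lüders operation `Φ(ρ) = A^{1/2} ρ A^{1/2}` of
`A = P_z + (1/2)P_{-z}` are strongly incompatible: there is no channel `Λ` and no
operation `Φ'` with `Φ'*(I) = P_x` such that `Λ` dominates both `Φ` and `Φ'`. -/
theorem Px_luders_strongly_incompatible :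
    ¬ ∃ (Λ Φ' : Mat 2 →ₗ[ℂ] Mat 2),
        IsCP Λ ∧ (∀ ρ : Mat 2, (Λ ρ).trace = ρ.trace) ∧
        IsCP Φ' ∧ (∀ ρ : Mat 2, (Φ' ρ).trace = (ρ * Px).trace) ∧
        IsCP (Λ - luders sqrtA) ∧ IsCP (Λ - Φ') := by
  rintro ⟨Λ, Φ', hΛcp, hΛtr, hPcp, hPtr, hDcp, hD'cp⟩
  have hP := hPcp 2 MM MM_psd
  have hD := hDcp 2 MM MM_psd
  have hD' := hD'cp 2 MM MM_psd
  -- trace facts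
  have tΛ : ∀ c d : Fin 2, Λ (rho c d) 0 0 + Λ (rho c d) 1 1 = if c = d then 1 else 0 := by
    intro c d
    have h := hΛtr (rho c d)
    rwa [Matrix.trace_fin_two, trace_rho] at h
  have tP : ∀ c d : Fin 2, Φ' (rho c d) 0 0 + Φ' (rho c d) 1 1 = 1/2 := by
    intro c d
    have h := hPtr (rho c d)
    rwa [Matrix.trace_fin_two, trace_rho_Px] at h
  -- diagonal positivity facts for Λ - luders
  have h1 : (0:ℂ) ≤ Λ (rho 0 0) 0 0 - 1 := by
    have h := hD.dotProduct_mulVec_nonneg (fun p => if p = (0,0) then 1 else 0)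
    simpa [dotProduct, Matrix.mulVec, Fintype.sum_prod_type, Fin.sum_univ_two,
      cpExt_MM, LinearMap.sub_apply, Matrix.sub_apply, lud_a, Prod.ext_iff] using h
  have h3 : (0:ℂ) ≤ Λ (rho 1 1) 1 1 - 1/2 := by
    have h := hD.dotProduct_mulVec_nonneg (fun p => if p = (1,1) then 1 else 0)
    simpa [dotProduct, Matrix.mulVec, Fintype.sum_prod_type, Fin.sum_univ_two,
      cpExt_MM, LinearMap.sub_apply, Matrix.sub_apply, lud_c, Prod.ext_iff] using h
  -- quadratic forms for D' = cpExt (Λ - Φ')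
  set D' := cpExt (Λ - Φ') 2 MM with hD'def
  set w : Fin 2 × Fin 2 → ℂ := fun p => if p.1 = 0 then 1 else 0 with hw
  set w' : Fin 2 × Fin 2 → ℂ := fun p => if p.1 = 1 then 1 else 0 with hw'
  have hqw : star w ⬝ᵥ D' *ᵥ w =
      (Λ (rho 0 0) 0 0 - Φ' (rho 0 0) 0 0) + (Λ (rho 0 1) 0 0 - Φ' (rho 0 1) 0 0)
      + (Λ (rho 1 0) 0 0 - Φ' (rho 1 0) 0 0) + (Λ (rho 1 1) 0 0 - Φ' (rho 1 1) 0 0) := by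
    simp [hD'def, hw, dotProduct, Matrix.mulVec, Fintype.sum_prod_type, Fin.sum_univ_two,
      cpExt_MM, LinearMap.sub_apply, Matrix.sub_apply]
    ring
  have hqw' : star w' ⬝ᵥ D' *ᵥ w' =
      (Λ (rho 0 0) 1 1 - Φ' (rho 0 0) 1 1) + (Λ (rho 0 1) 1 1 - Φ' (rho 0 1) 1 1)
      + (Λ (rho 1 0) 1 1 - Φ' (rho 1 0) 1 1) + (Λ (rho 1 1) 1 1 - Φ' (rho 1 1) 1 1) := by
    simp [hD'def, hw', dotProduct, Matrix.mulVec, Fintype.sum_prod_type, Fin.sum_univ_two,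
      cpExt_MM, LinearMap.sub_apply, Matrix.sub_apply]
    ring
  have t00 := tΛ 0 0; have t01 := tΛ 0 1; have t10 := tΛ 1 0; have t11 := tΛ 1 1
  rw [if_pos rfl] at t00
  rw [if_pos rfl] at t11
  rw [if_neg (by decide)] at t01
  rw [if_neg (by decide)] at t10
  have hsum : star w ⬝ᵥ D' *ᵥ w + star w' ⬝ᵥ D' *ᵥ w' = 0 := by
    rw [hqw, hqw']
    linear_combination t00 + t01 + t10 + t11 - tP 0 0 - tP 0 1 - tP 1 0 - tP 1 1
  have hq0 : star w ⬝ᵥ D' *ᵥ w = 0 := by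
    have hle : star w ⬝ᵥ D' *ᵥ w ≤ 0 := by
      calc star w ⬝ᵥ D' *ᵥ w ≤ star w ⬝ᵥ D' *ᵥ w + star w' ⬝ᵥ D' *ᵥ w' :=
        le_add_of_nonneg_right (hD'.dotProduct_mulVec_nonneg w')
      _ = 0 := hsum
    exact le_antisymm hle (hD'.dotProduct_mulVec_nonneg w)
  have hker := (hD'.dotProduct_mulVec_zero_iff w).mp hq0
  have k1 := congrFun hker (0,0)
  have k2 := congrFun hker (0,1)
  simp [Matrix.mulVec, dotProduct, Fintype.sum_prod_type, Fin.sum_univ_two,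
    hD'def, cpExt_MM, LinearMap.sub_apply, Matrix.sub_apply, hw] at k1 k2
  -- quadratic forms for cpExt Φ'
  set NP := cpExt Φ' 2 MM with hNPdef
  set u : Fin 2 × Fin 2 → ℂ := fun p => if p.1 = 0 then (if p.2 = 0 then 1 else -1) else 0 with hu
  set u' : Fin 2 × Fin 2 → ℂ := fun p => if p.1 = 1 then (if p.2 = 0 then 1 else -1) else 0 with hu'
  have hru : star u ⬝ᵥ NP *ᵥ u =
      Φ' (rho 0 0) 0 0 - Φ' (rho 0 1) 0 0 - Φ' (rho 1 0) 0 0 + Φ' (rho 1 1) 0 0 := by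
    simp [hNPdef, hu, dotProduct, Matrix.mulVec, Fintype.sum_prod_type, Fin.sum_univ_two,
      cpExt_MM]
    ring
  have hru' : star u' ⬝ᵥ NP *ᵥ u' =
      Φ' (rho 0 0) 1 1 - Φ' (rho 0 1) 1 1 - Φ' (rho 1 0) 1 1 + Φ' (rho 1 1) 1 1 := by
    simp [hNPdef, hu', dotProduct, Matrix.mulVec, Fintype.sum_prod_type, Fin.sum_univ_two,
      cpExt_MM]
    ring
  have hrsum : star u ⬝ᵥ NP *ᵥ u + star u' ⬝ᵥ NP *ᵥ u' = 0 := by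
    rw [hru, hru']
    linear_combination tP 0 0 - tP 0 1 - tP 1 0 + tP 1 1
  have hr0 : star u ⬝ᵥ NP *ᵥ u = 0 := by
    have hle : star u ⬝ᵥ NP *ᵥ u ≤ 0 := by
      calc star u ⬝ᵥ NP *ᵥ u ≤ star u ⬝ᵥ NP *ᵥ u + star u' ⬝ᵥ NP *ᵥ u' :=
        le_add_of_nonneg_right (hP.dotProduct_mulVec_nonneg u')
      _ = 0 := hrsum
    exact le_antisymm hle (hP.dotProduct_mulVec_nonneg u)
  have hker' := (hP.dotProduct_mulVec_zero_iff u).mp hr0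
  have m1 := congrFun hker' (0,0)
  have m2 := congrFun hker' (0,1)
  simp [Matrix.mulVec, dotProduct, Fintype.sum_prod_type, Fin.sum_univ_two,
    hNPdef, cpExt_MM, hu] at m1 m2
  -- hermiticity facts
  have herm1 := hD'.1.apply ((0:Fin 2),(0:Fin 2)) ((0:Fin 2),(1:Fin 2))
  have herm2 := hP.1.apply ((0:Fin 2),(0:Fin 2)) ((0:Fin 2),(1:Fin 2))
  simp [hD'def, hNPdef, cpExt_MM, LinearMap.sub_apply, Matrix.sub_apply] at herm1 herm2
  -- conjugation bookkeeping
  have e1 : (starRingEnd ℂ) (Λ (rho 1 0) 0 0)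
      = 2 * Φ' (rho 0 1) 0 0 - Λ (rho 0 0) 0 0 := by
    linear_combination herm1 + herm2 + k1 + m1
  have e2 := congrArg (starRingEnd ℂ) e1
  simp only [map_sub, _root_.map_mul, Complex.conj_conj, map_ofNat] at e2
  have e3 : (starRingEnd ℂ) (Φ' (rho 0 1) 0 0) = Φ' (rho 1 0) 0 0 := by
    rw [← herm2]; exact Complex.conj_conj _
  have hδ : Λ (rho 1 1) 0 0 = (starRingEnd ℂ) (Λ (rho 0 0) 0 0) := by
    linear_combination k2 - e2 - 2*e3 - m2
  have hε : Λ (rho 1 1) 1 1 = 1 - (starRingEnd ℂ) (Λ (rho 0 0) 0 0) := by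
    linear_combination t11 - hδ
  rw [hε] at h3
  rw [Complex.le_def] at h1 h3
  have r1 : (1:ℝ) ≤ (Λ (rho 0 0) 0 0).re := by
    have := h1.1
    simp only [Complex.zero_re, Complex.sub_re, Complex.one_re] at this
    linarith
  have r2 : (Λ (rho 0 0) 0 0).re ≤ 1/2 := by
    have := h3.1
    simp only [Complex.zero_re, Complex.sub_re, Complex.one_re, Complex.conj_re,
      Complex.div_re, Complex.one_im, Complex.ofReal_re] at this
    norm_num at this
    linarith
  linarith
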